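/- Let E be a finite nonempty set of functions of type A → B, let ≺ be an irreflexive transitive relation on B, and let ∅ ≠ A₀ ⊆ A₁ ⊆ ... ⊆ Aₙ ⊆ A be a chain of subsets of A. Then there exists f ∈ E that is simultaneously maximal in E with respect to each extended order ≺^{A₀}, ..., ≺^{Aₙ}. -/

import Mathlib

/-- The extension of a relation `r` on `B` to functions `A → B`, relative to
    a subset `A'` of the domain. -/
def precOn {A B : Type*} (r : B → B → Prop) (A' : Set A) (f f' : A → B) : Prop :=
  (∀ x ∈ A', r (f x) (f' x) ∨ f x = f' x) ∧ ∃ x ∈ A', r (f x) (f' x)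

lemma precOn_trans {A B : Type*} {r : B → B → Prop}
    (htr : ∀ x y z : B, r x y → r y z → r x z) (A' : Set A) :
    Transitive (precOn r A') := by
  rintro f g h ⟨h1, x, hx, hr⟩ ⟨h2, -⟩
  refine ⟨fun y hy => ?_, x, hx, ?_⟩
  · rcases h1 y hy with hr1 | he1 <;> rcases h2 y hy with hr2 | he2
    · exact Or.inl (htr _ _ _ hr1 hr2)
    · exact Or.inl (he2 ▸ hr1)
    · exact Or.inl (he1 ▸ hr2)
    · exact Or.inr (he1.trans he2)
  · rcases h2 x hx with hr2 | he2
    · exact htr _ _ _ hr hr2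
    · exact he2 ▸ hr

lemma exists_max_of_finite {α : Type*} (s : α → α → Prop) (htr : Transitive s)
    (hirr : ∀ a, ¬ s a a) {E : Set α} (hfin : E.Finite) :
    E.Nonempty → ∃ f ∈ E, ∀ g ∈ E, ¬ s f g := by
  refine Set.Finite.induction_on (motive := fun E _ => E.Nonempty → ∃ f ∈ E, ∀ g ∈ E, ¬ s f g) E
    hfin (fun h => absurd h (by simp)) ?_
  intro a F ha hFfin ih
  intro _
  by_cases hE : F.Nonempty
  · obtain ⟨f, hf, hmax⟩ := ih hE
    by_cases hfa : s f a
    · refine ⟨a, Set.mem_insert _ _, fun g hg hsg => ?_⟩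
      rcases hg with rfl | hg
      · exact hirr g hsg
      · exact hmax g hg (htr hfa hsg)
    · refine ⟨f, Set.mem_insert_of_mem _ hf, fun g hg hsg => ?_⟩
      rcases hg with rfl | hg
      · exact hfa hsg
      · exact hmax g hg hsg
  · refine ⟨a, Set.mem_insert _ _, fun g hg hsg => ?_⟩
    rcases hg with rfl | hg
    · exact hirr g hsg
    · exact hE ⟨g, hg⟩

lemma stmt3_aux {A B : Type*} (r : B → B → Prop)
    (hirr : ∀ b, ¬ r b b) (htr : ∀ {x y z : B}, r x y → r y z → r x z) :
    ∀ n : ℕ, ∀ Ach : Fin (n + 1) → Set A, Monotone Ach →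
    ∀ E : Set (A → B), E.Finite → E.Nonempty →
    ∃ f ∈ E, ∀ i : Fin (n + 1), ∀ g ∈ E, ¬ precOn r (Ach i) f g := by
  intro n
  induction n with
  | zero =>
    intro Ach _ E hEfin hEne
    obtain ⟨f, hf, hmax⟩ := exists_max_of_finite (precOn r (Ach 0))
      (precOn_trans (r := r) (fun _ _ _ h1 h2 => htr h1 h2) _) (fun f ⟨_, x, _, hx⟩ => hirr _ hx) hEfin hEne
    exact ⟨f, hf, fun i g hg => by have : i = 0 := Fin.ext (by omega); rw [this]; exact hmax g hg⟩
  | succ n ih =>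
    intro Ach hmono E hEfin hEne
    -- E₀ : maximal elements w.r.t. the smallest set Ach 0
    set E₀ : Set (A → B) := {f ∈ E | ∀ g ∈ E, ¬ precOn r (Ach 0) f g} with hE₀def
    have hE₀fin : E₀.Finite := hEfin.subset (Set.sep_subset _ _)
    have hE₀ne : E₀.Nonempty := by
      obtain ⟨f, hf, hmax⟩ := exists_max_of_finite (precOn r (Ach 0))
        (precOn_trans (r := r) (fun _ _ _ h1 h2 => htr h1 h2) _) (fun f ⟨_, x, _, hx⟩ => hirr _ hx) hEfin hEne
      exact ⟨f, hf, hmax⟩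
    have hmono' : Monotone (fun i : Fin (n + 1) => Ach i.succ) := by
      intro i j hij
      exact hmono (by simpa using hij)
    obtain ⟨f, ⟨hfE, hfmax0⟩, hfmax⟩ :=
      ih (fun i => Ach i.succ) hmono' E₀ hE₀fin hE₀ne
    refine ⟨f, hfE, fun i g hg => ?_⟩
    induction i using Fin.cases with
    | zero => exact hfmax0 g hg
    | succ j =>
      intro hprec
      -- first: f = g on Ach 0
      have h0sub : Ach 0 ⊆ Ach j.succ := hmono (Fin.zero_le _)
      have heq0 : ∀ x ∈ Ach 0, f x = g x := by
        intro x hx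
        rcases hprec.1 x (h0sub hx) with hrx | hex
        · exact absurd ⟨fun y hy => hprec.1 y (h0sub hy), x, hx, hrx⟩ (hfmax0 g hg)
        · exact hex
      have hgE₀ : g ∈ E₀ := by
        refine ⟨hg, fun h hh ⟨hp1, x, hx, hrx⟩ => ?_⟩
        exact hfmax0 h hh ⟨fun y hy => heq0 y hy ▸ hp1 y hy, x, hx, heq0 x hx ▸ hrx⟩
      exact hfmax j g hgE₀ hprec

theorem stmt3 {A B : Type*} (r : B → B → Prop)
    (hirr : ∀ b, ¬ r b b) (htr : ∀ {x y z : B}, r x y → r y z → r x z)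
    (E : Set (A → B)) (hEfin : E.Finite) (hEne : E.Nonempty)
    (n : ℕ) (Ach : Fin (n + 1) → Set A) (hmono : Monotone Ach)
    (h0 : (Ach 0).Nonempty) :
    ∃ f ∈ E, ∀ i : Fin (n + 1), ∀ g ∈ E, ¬ precOn r (Ach i) f g := by
  exact stmt3_aux r hirr htr n Ach hmono E hEfin hEne
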